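/- Suppose the escalation benefit m_H − m_L is weakly decreasing on [0,1] (s' > s'' implies m_H(s') − m_L(s') ≤ m_H(s'') − m_L(s'')). Let λ ≥ 0 and let τ* ∈ (0,1) satisfy the first-order condition m_H(τ*) − m_L(τ*) = λ · c_H. Then τ* is a global maximizer of the Lagrangian τ ↦ U(τ) − λ·C(τ) over [0,1]; that is, under a decreasing-benefit condition the first-order condition is sufficient for global optimality. -/

import Mathlib

/-- If the escalation benefit `mH - mL` is weakly decreasing
on `[0,1]`, `λ ≥ 0`, and `τ* ∈ (0,1)` satisfies the first-order condition
`mH τ* - mL τ* = λ * cH`, then `τ*` is a global maximizer of the Lagrangian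
`τ ↦ U τ - λ C τ` over `[0,1]`. -/
theorem two_model_cascade_foc_sufficient
    (f mL mH : ℝ → ℝ) (hf : Continuous f)
    (hf0 : ∀ s ∈ Set.Icc (0:ℝ) 1, 0 ≤ f s)
    (hfint : (∫ s in (0:ℝ)..1, f s) = 1)
    (hmL : Continuous mL) (hmH : Continuous mH)
    (cL cH : ℝ) (hcL : 0 ≤ cL) (hcH : 0 < cH)
    (C U : ℝ → ℝ)
    (hC : ∀ τ, C τ = cL + cH * ∫ s in (0:ℝ)..τ, f s)
    (hU : ∀ τ, U τ = (∫ s in (0:ℝ)..τ, mH s * f s) + ∫ s in τ..(1:ℝ), mL s * f s)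
    (hdec : ∀ s' ∈ Set.Icc (0:ℝ) 1, ∀ s'' ∈ Set.Icc (0:ℝ) 1, s'' < s' →
      mH s' - mL s' ≤ mH s'' - mL s'')
    (lam : ℝ) (hlam : 0 ≤ lam)
    (τstar : ℝ) (hτstar : τstar ∈ Set.Ioo (0:ℝ) 1)
    (hfoc : mH τstar - mL τstar = lam * cH) :
    ∀ τ ∈ Set.Icc (0:ℝ) 1, U τ - lam * C τ ≤ U τstar - lam * C τstar := by
  intro τ hτ
  obtain ⟨hτ0, hτ1⟩ := hτ
  obtain ⟨hs0, hs1⟩ := hτstar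
  have hHf : Continuous fun s => mH s * f s := hmH.mul hf
  have hLf : Continuous fun s => mL s * f s := hmL.mul hf
  have key : U τstar - lam * C τstar - (U τ - lam * C τ)
      = ∫ s in τ..τstar, (mH s - mL s - lam * cH) * f s := by
    have h1 : (∫ s in (0:ℝ)..τstar, mH s * f s) - ∫ s in (0:ℝ)..τ, mH s * f s
        = ∫ s in τ..τstar, mH s * f s :=
      intervalIntegral.integral_interval_sub_left
        (hHf.intervalIntegrable 0 τstar) (hHf.intervalIntegrable 0 τ)
    have h2 : (∫ s in τ..τstar, mL s * f s) + ∫ s in τstar..(1:ℝ), mL s * f s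
        = ∫ s in τ..(1:ℝ), mL s * f s :=
      intervalIntegral.integral_add_adjacent_intervals
        (hLf.intervalIntegrable τ τstar) (hLf.intervalIntegrable τstar 1)
    have h3 : (∫ s in (0:ℝ)..τstar, f s) - ∫ s in (0:ℝ)..τ, f s
        = ∫ s in τ..τstar, f s :=
      intervalIntegral.integral_interval_sub_left
        (hf.intervalIntegrable 0 τstar) (hf.intervalIntegrable 0 τ)
    have h4 : (∫ s in τ..τstar, (mH s - mL s - lam * cH) * f s)
        = (∫ s in τ..τstar, mH s * f s) - (∫ s in τ..τstar, mL s * f s)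
          - lam * cH * ∫ s in τ..τstar, f s := by
      rw [← intervalIntegral.integral_const_mul,
        ← intervalIntegral.integral_sub (hHf.intervalIntegrable τ τstar)
          (hLf.intervalIntegrable τ τstar),
        ← intervalIntegral.integral_sub (f := fun x => mH x * f x - mL x * f x)
          (g := fun x => lam * cH * f x)
          ((hHf.sub hLf).intervalIntegrable τ τstar)
          ((continuous_const.mul hf).intervalIntegrable τ τstar)]
      apply intervalIntegral.integral_congr
      intro s _
      ring
    have h3' : lam * cH * (∫ s in (0:ℝ)..τstar, f s)
        - lam * cH * ∫ s in (0:ℝ)..τ, f s = lam * cH * ∫ s in τ..τstar, f s := by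
      rw [← mul_sub, h3]
    rw [hU, hU, hC, hC, h4]
    linarith [h1, h2, h3']
  have hnn : 0 ≤ ∫ s in τ..τstar, (mH s - mL s - lam * cH) * f s := by
    rcases le_total τ τstar with h | h
    · apply intervalIntegral.integral_nonneg h
      intro s hs
      have hs01 : s ∈ Set.Icc (0:ℝ) 1 := ⟨le_trans hτ0 hs.1, le_trans hs.2 hs1.le⟩
      have hfs := hf0 s hs01
      have hg : lam * cH ≤ mH s - mL s := by
        rcases eq_or_lt_of_le hs.2 with he | hlt
        · rw [he]; exact hfoc.ge
        · exact hfoc ▸ hdec τstar ⟨hs0.le, hs1.le⟩ s hs01 hlt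
      nlinarith
    · rw [intervalIntegral.integral_symm τstar τ]
      have hle : 0 ≤ ∫ s in τstar..τ, -((mH s - mL s - lam * cH) * f s) := by
        apply intervalIntegral.integral_nonneg h
        intro s hs
        have hs01 : s ∈ Set.Icc (0:ℝ) 1 := ⟨le_trans hs0.le hs.1, le_trans hs.2 hτ1⟩
        have hfs := hf0 s hs01
        have hg : mH s - mL s ≤ lam * cH := by
          rcases eq_or_lt_of_le hs.1 with he | hlt
          · rw [← he]; exact hfoc.le
          · exact hfoc ▸ hdec s hs01 τstar ⟨hs0.le, hs1.le⟩ hlt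
        nlinarith
      rw [intervalIntegral.integral_neg] at hle
      linarith
  linarith
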